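/- The full interruption of any node j equals the sum of islacks along the directed path from the root to j: u_j = Σ_{i ∈ path(0,j)} F_i. -/

import Mathlib

open scoped Classical BigOperators

/-- A finite arborescence: every node has a parent, the root is its own parent,
and every node reaches the root by iterating `parent`.  The arcs of the tree are
the pairs `(parent j, j)` for non-root `j`. -/
structure Arbor (V : Type*) where
  root : V
  parent : V → V
  parent_root : parent root = root
  reaches_root : ∀ v : V, ∃ n : ℕ, parent^[n] v = root

variable {V : Type*}

/-- `T.desc j i` : node `i` belongs to the subtree rooted at `j`
(equivalently, `j` lies on the directed path from the root to `i`). -/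
def Arbor.desc (T : Arbor V) (j i : V) : Prop := ∃ n : ℕ, T.parent^[n] i = j

/-- The children of node `i`. -/
noncomputable def Arbor.children [Fintype V] (T : Arbor V) (i : V) : Finset V :=
  Finset.univ.filter fun j => j ≠ T.root ∧ T.parent j = i

/-- The subtree rooted at `j`, as a finset (the set `V_j`). -/
noncomputable def Arbor.subtree [Fintype V] (T : Arbor V) (j : V) : Finset V :=
  Finset.univ.filter fun i => T.desc j i

/-- The node set of the unique directed path from the root to `j` (the set `path(0,j)`). -/
noncomputable def Arbor.pathSet [Fintype V] (T : Arbor V) (j : V) : Finset V :=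
  Finset.univ.filter fun i => T.desc i j

/-- The arcs of the tree, each arc `(parent j, j)` identified with its head `j ≠ root`. -/
noncomputable def Arbor.arcs [Fintype V] (T : Arbor V) : Finset V :=
  Finset.univ.filter fun j => j ≠ T.root

/-- the full interruption of any node equals the sum of islacks along the
directed path from the root to that node. -/
theorem full_interruption_eq_path_islack_sum [Fintype V] (T : Arbor V) (As : V → Prop)
    (θ θt f u F : V → ℝ) (hθ : ∀ i, 0 ≤ θ i)
    (hrec : ∀ i, θt i = θ i + ∑ j ∈ (T.children i).filter (fun j => ¬ As j), θt j)
    (hf : ∀ j, f j = if As j then 0 else θt j)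
    (hu0 : u T.root = θt T.root)
    (hu : ∀ j, j ≠ T.root → u j = u (T.parent j) + (if As j then θt j else 0))
    (hFroot : F T.root = θ T.root + ∑ k ∈ T.children T.root, f k)
    (hF : ∀ j, j ≠ T.root → F j = θ j + (∑ k ∈ T.children j, f k) - f j) :
    ∀ j, u j = ∑ i ∈ T.pathSet j, F i := by
  classical
  have hfix : ∀ k, T.parent^[k] T.root = T.root := fun k =>
    Function.iterate_fixed T.parent_root k
  have hroot_after : ∀ (v : V) (m k : ℕ), T.parent^[m] v = T.root →
      T.parent^[k + m] v = T.root := by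
    intro v m k hm
    rw [Function.iterate_add_apply, hm, hfix]
  have hnocycle : ∀ j : V, j ≠ T.root → ¬ T.desc j (T.parent j) := by
    rintro j hj ⟨n, hn⟩
    have h1 : T.parent^[n + 1] j = j := by
      rw [Function.iterate_succ_apply, hn]
    obtain ⟨m, hm⟩ := T.reaches_root j
    have hcyc : ∀ k, T.parent^[k * (n + 1)] j = j := by
      intro k
      induction k with
      | zero => simp
      | succ k ih =>
        rw [Nat.succ_mul, Function.iterate_add_apply, h1, ih]
    have h2 : T.parent^[m * n + m] j = T.root := hroot_after j m (m * n) hm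
    have h3 : T.parent^[m * (n + 1)] j = j := hcyc m
    rw [Nat.mul_add, Nat.mul_one] at h3
    exact hj (h3 ▸ h2 : _)
  have hpath_root : T.pathSet T.root = {T.root} := by
    ext i
    simp only [Arbor.pathSet, Finset.mem_filter, Finset.mem_univ, true_and,
      Finset.mem_singleton]
    simp only [Arbor.desc]
    constructor
    · rintro ⟨n, hn⟩; rw [hfix n] at hn; exact hn.symm
    · rintro rfl; exact ⟨0, rfl⟩
  have hpath_step : ∀ j, j ≠ T.root → T.pathSet j = insert j (T.pathSet (T.parent j)) := by
    intro j hj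
    ext i
    simp only [Arbor.pathSet, Finset.mem_filter, Finset.mem_univ, true_and,
      Finset.mem_insert]
    simp only [Arbor.desc]
    constructor
    · rintro ⟨n, hn⟩
      cases n with
      | zero => exact Or.inl hn.symm
      | succ n => exact Or.inr ⟨n, by rwa [Function.iterate_succ_apply] at hn⟩
    · rintro (rfl | ⟨n, hn⟩)
      · exact ⟨0, rfl⟩
      · exact ⟨n + 1, by rwa [Function.iterate_succ_apply]⟩
  have hsumf : ∀ i, ∑ k ∈ T.children i, f k
      = ∑ k ∈ (T.children i).filter (fun k => ¬ As k), θt k := by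
    intro i
    rw [Finset.sum_filter]
    refine Finset.sum_congr rfl fun k _ => ?_
    rw [hf]; by_cases h : As k <;> simp [h]
  have hFr : F T.root = θt T.root := by
    rw [hFroot, hsumf, ← hrec]
  have hFj : ∀ j, j ≠ T.root → F j = θt j - f j := by
    intro j hj
    rw [hF j hj, hsumf, ← hrec]
  have main : ∀ n : ℕ, ∀ j : V, T.parent^[n] j = T.root → u j = ∑ i ∈ T.pathSet j, F i := by
    intro n
    induction n with
    | zero =>
      intro j hj
      simp only [Function.iterate_zero_apply] at hj
      subst hj
      rw [hpath_root, Finset.sum_singleton, hFr, hu0]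
    | succ n ih =>
      intro j hj
      by_cases hjr : j = T.root
      · subst hjr; rw [hpath_root, Finset.sum_singleton, hFr, hu0]
      · have hp : T.parent^[n] (T.parent j) = T.root := by
          rwa [← Function.iterate_succ_apply]
        have hnotmem : j ∉ T.pathSet (T.parent j) := by
          simp only [Arbor.pathSet, Finset.mem_filter, Finset.mem_univ, true_and]
          exact hnocycle j hjr
        rw [hpath_step j hjr, Finset.sum_insert hnotmem, ← ih _ hp, hu j hjr, hFj j hjr]
        have hif : (if As j then θt j else 0) = θt j - f j := by
          rw [hf]; by_cases h : As j <;> simp [h]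
        rw [hif]; ring
  intro j
  obtain ⟨n, hn⟩ := T.reaches_root j
  exact main n j hn
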